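/- arXiv:0711.0896 — 2 statements merged into one kernel-verified Lean document; each statement's English description precedes it below -/
import Mathlib

section
/- Let R be a complete discrete valuation ring with uniformizer π whose residue field is algebraically closed of characteristic p ≥ 0. Let n', a', b' be positive integers with n' not divisible by p and gcd(a', b', n') = 1. Set e = gcd(n', a'), c = gcd(n', b'), n'' = n'/(e·c), a'' = a'/e, b'' = b'/c. Let Ψ : R[[u,v]] → R[[s,t]] be the R-algebra homomorphism determined by u ↦ s^{c} and v ↦ t^{e}. Then Ψ induces an injective ring homomorphism from A = R[[u,v]]/(π^{n'} − u^{a'}·v^{b'}) to B = R[[s,t]]/(π^{n''} − s^{a''}·t^{b''}), B is a finite A-module generated by the monomials s^{i}t^{j} with 0 ≤ i < c and 0 ≤ j < e, and the induced map of fraction fields Frac(A) → Frac(B) is an isomorphism. -/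
/-- The ideal `(π^{m} − u^{a}·v^{b})` of `R[[u,v]] = MvPowerSeries (Fin 2) R`
(with `u = X 0`, `v = X 1`). -/
noncomputable abbrev stmt5.I (R : Type) [CommRing R] (π : R) (m a b : ℕ) :
    Ideal (MvPowerSeries (Fin 2) R) :=
  Ideal.span {(MvPowerSeries.C (σ := Fin 2) (R := R) π) ^ m
    - (MvPowerSeries.X (0 : Fin 2)) ^ a * (MvPowerSeries.X (1 : Fin 2)) ^ b}

/-- The quotient ring `R[[u,v]]/(π^{m} − u^{a}·v^{b})`. -/
abbrev stmt5.Q (R : Type) [CommRing R] (π : R) (m a b : ℕ) : Type :=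
  MvPowerSeries (Fin 2) R ⧸ stmt5.I R π m a b

namespace stmt5aux
open MvPowerSeries Finsupp Finset

variable {R : Type} [CommRing R]

noncomputable def pair (i j : ℕ) : Fin 2 →₀ ℕ := Finsupp.single 0 i + Finsupp.single 1 j

lemma pair_apply_zero (i j : ℕ) : pair i j 0 = i := by
  simp [pair, Finsupp.single_apply]

lemma pair_apply_one (i j : ℕ) : pair i j 1 = j := by
  simp [pair, Finsupp.single_apply]

lemma pair_eval (d : Fin 2 →₀ ℕ) : pair (d 0) (d 1) = d := by
  ext x
  fin_cases x
  · exact pair_apply_zero _ _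
  · exact pair_apply_one _ _

lemma pair_le_iff {i j : ℕ} {d : Fin 2 →₀ ℕ} : pair i j ≤ d ↔ i ≤ d 0 ∧ j ≤ d 1 := by
  rw [Finsupp.le_def]
  constructor
  · intro h
    exact ⟨(pair_apply_zero i j) ▸ h 0, (pair_apply_one i j) ▸ h 1⟩
  · rintro ⟨h0, h1⟩ x
    fin_cases x
    · show pair i j 0 ≤ d 0
      rw [pair_apply_zero]; exact h0
    · show pair i j 1 ≤ d 1
      rw [pair_apply_one]; exact h1

lemma sub_pair (d : Fin 2 →₀ ℕ) (i j : ℕ) : d - pair i j = pair (d 0 - i) (d 1 - j) := by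
  ext x
  fin_cases x
  · rw [Finsupp.tsub_apply]
    show d 0 - pair i j 0 = pair (d 0 - i) (d 1 - j) 0
    rw [pair_apply_zero, pair_apply_zero]
  · rw [Finsupp.tsub_apply]
    show d 1 - pair i j 1 = pair (d 0 - i) (d 1 - j) 1
    rw [pair_apply_one, pair_apply_one]

lemma pair_eq_iff {i j : ℕ} {d : Fin 2 →₀ ℕ} : pair i j = d ↔ i = d 0 ∧ j = d 1 := by
  constructor
  · rintro rfl; exact ⟨(pair_apply_zero i j).symm, (pair_apply_one i j).symm⟩
  · rintro ⟨rfl, rfl⟩; exact pair_eval d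

noncomputable def mono (i j : ℕ) : MvPowerSeries (Fin 2) R :=
  MvPowerSeries.monomial (R := R) (pair i j) 1

lemma X_pow_mul_X_pow (i j : ℕ) :
    (MvPowerSeries.X 0 : MvPowerSeries (Fin 2) R) ^ i * MvPowerSeries.X 1 ^ j = mono i j := by
  rw [MvPowerSeries.X_pow_eq, MvPowerSeries.X_pow_eq, MvPowerSeries.monomial_mul_monomial,
    one_mul, mono, pair]

noncomputable def Tc (c e i j : ℕ) (g : MvPowerSeries (Fin 2) R) : MvPowerSeries (Fin 2) R :=
  fun d => MvPowerSeries.coeff (R := R) (pair (c * d 0 + i) (e * d 1 + j)) g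

lemma coeff_Tc (c e i j : ℕ) (g : MvPowerSeries (Fin 2) R) (d : Fin 2 →₀ ℕ) :
    MvPowerSeries.coeff (R := R) d (Tc c e i j g) =
      MvPowerSeries.coeff (R := R) (pair (c * d 0 + i) (e * d 1 + j)) g := rfl

noncomputable def T (c e : ℕ) (g : MvPowerSeries (Fin 2) R) : MvPowerSeries (Fin 2) R :=
  fun d => MvPowerSeries.coeff (R := R) (pair (c * d 0) (e * d 1)) g

lemma coeff_T (c e : ℕ) (g : MvPowerSeries (Fin 2) R) (d : Fin 2 →₀ ℕ) :
    MvPowerSeries.coeff (R := R) d (T c e g) = MvPowerSeries.coeff (R := R) (pair (c * d 0) (e * d 1)) g := rfl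


lemma T_sum {ι : Type*} (c e : ℕ) (s : Finset ι) (F : ι → MvPowerSeries (Fin 2) R) :
    T c e (∑ i ∈ s, F i) = ∑ i ∈ s, T c e (F i) := by
  apply MvPowerSeries.ext; intro d
  rw [coeff_T, map_sum, map_sum]
  exact Finset.sum_congr rfl fun i _ => (coeff_T c e (F i) d).symm

lemma mono_zero_zero : (mono 0 0 : MvPowerSeries (Fin 2) R) = 1 := by
  rw [mono, show pair 0 0 = (0 : Fin 2 →₀ ℕ) by
    rw [pair, Finsupp.single_zero, Finsupp.single_zero, add_zero],
    MvPowerSeries.monomial_zero_one]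

lemma T_sub (c e : ℕ) (g g' : MvPowerSeries (Fin 2) R) :
    T c e (g - g') = T c e g - T c e g' := by
  apply MvPowerSeries.ext; intro d
  rw [map_sub, coeff_T, coeff_T, coeff_T, map_sub]

lemma T_C_mul (c e : ℕ) (r : R) (g : MvPowerSeries (Fin 2) R) :
    T c e (MvPowerSeries.C (σ := Fin 2) (R := R) r * g) = MvPowerSeries.C (σ := Fin 2) (R := R) r * T c e g := by
  apply MvPowerSeries.ext; intro d
  rw [coeff_T, MvPowerSeries.coeff_C_mul, MvPowerSeries.coeff_C_mul, coeff_T]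

lemma T_monomial_mul {c e : ℕ} (hc : 0 < c) (he : 0 < e) (i j : ℕ)
    (g : MvPowerSeries (Fin 2) R) :
    T c e (mono (c * i) (e * j) * g) = mono i j * T c e g := by
  apply MvPowerSeries.ext; intro d
  rw [coeff_T, mono, mono, MvPowerSeries.coeff_monomial_mul, MvPowerSeries.coeff_monomial_mul]
  by_cases h : pair i j ≤ d
  · obtain ⟨h0, h1⟩ := pair_le_iff.1 h
    have hle2 : pair (c * i) (e * j) ≤ pair (c * d 0) (e * d 1) := by
      refine pair_le_iff.2 ?_
      rw [pair_apply_zero, pair_apply_one]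
      exact ⟨Nat.mul_le_mul_left c h0, Nat.mul_le_mul_left e h1⟩
    rw [if_pos h, if_pos hle2]
    congr 1
    rw [sub_pair, sub_pair, coeff_T]
    simp only [pair_apply_zero, pair_apply_one, Nat.mul_sub]
  · rw [if_neg h, if_neg]
    intro hle
    obtain ⟨h0, h1⟩ := pair_le_iff.1 hle
    rw [pair_apply_zero _ _] at h0
    rw [pair_apply_one _ _] at h1
    exact h (pair_le_iff.2 ⟨Nat.le_of_mul_le_mul_left h0 hc, Nat.le_of_mul_le_mul_left h1 he⟩)


section Psi

variable {c e : ℕ} (Ψ : MvPowerSeries (Fin 2) R →ₐ[R] MvPowerSeries (Fin 2) R)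
variable (hΨ : ∀ (f : MvPowerSeries (Fin 2) R) (d : Fin 2 →₀ ℕ),
      MvPowerSeries.coeff (R := R) d (Ψ f) =
        if c ∣ d 0 ∧ e ∣ d 1 then
          MvPowerSeries.coeff (R := R)
            (Finsupp.single 0 (d 0 / c) + Finsupp.single 1 (d 1 / e)) f
        else 0)

include hΨ

lemma coeff_Psi (f : MvPowerSeries (Fin 2) R) (d : Fin 2 →₀ ℕ) :
    MvPowerSeries.coeff (R := R) d (Ψ f) =
      if c ∣ d 0 ∧ e ∣ d 1 then
        MvPowerSeries.coeff (R := R) (pair (d 0 / c) (d 1 / e)) f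
      else 0 := hΨ f d

lemma T_Psi (hc : 0 < c) (he : 0 < e) (f : MvPowerSeries (Fin 2) R) :
    T c e (Ψ f) = f := by
  apply MvPowerSeries.ext; intro d
  rw [coeff_T, coeff_Psi Ψ hΨ]
  rw [if_pos ⟨by rw [pair_apply_zero]; exact Dvd.intro _ rfl,
      by rw [pair_apply_one]; exact Dvd.intro _ rfl⟩]
  simp only [pair_apply_zero, pair_apply_one]
  rw [Nat.mul_div_cancel_left _ hc, Nat.mul_div_cancel_left _ he, pair_eval]

lemma T_Psi_mul_monomial_eq_zero (i j : ℕ) (hij : ¬ (c ∣ i ∧ e ∣ j))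
    (f : MvPowerSeries (Fin 2) R) :
    T c e (Ψ f * mono i j) = 0 := by
  apply MvPowerSeries.ext; intro d
  conv_rhs => rw [map_zero]
  rw [coeff_T, mono, MvPowerSeries.coeff_mul_monomial]
  by_cases h : pair i j ≤ pair (c * d 0) (e * d 1)
  · rw [if_pos h, sub_pair, coeff_Psi Ψ hΨ]
    simp only [pair_apply_zero, pair_apply_one]
    obtain ⟨h0, h1⟩ := pair_le_iff.1 h
    rw [pair_apply_zero _ _] at h0
    rw [pair_apply_one _ _] at h1
    have hcond : ¬ (c ∣ c * d 0 - i ∧ e ∣ e * d 1 - j) := by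
      rintro ⟨hd0, hd1⟩
      refine hij ⟨?_, ?_⟩
      · have h2 : c ∣ c * d 0 - (c * d 0 - i) := Nat.dvd_sub (Dvd.intro _ rfl) hd0
        rwa [Nat.sub_sub_self h0] at h2
      · have h2 : e ∣ e * d 1 - (e * d 1 - j) := Nat.dvd_sub (Dvd.intro _ rfl) hd1
        rwa [Nat.sub_sub_self h1] at h2
    rw [if_neg hcond, zero_mul]
  · rw [if_neg h]

omit hΨ in
lemma Psi_C (r : R) : Ψ (MvPowerSeries.C (σ := Fin 2) (R := R) r) = MvPowerSeries.C (σ := Fin 2) (R := R) r := by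
  rw [MvPowerSeries.c_eq_algebraMap]
  exact Ψ.commutes r

lemma Psi_X0 (hc : 0 < c) (he : 0 < e) :
    Ψ (MvPowerSeries.X 0) = (MvPowerSeries.X 0 : MvPowerSeries (Fin 2) R) ^ c := by
  apply MvPowerSeries.ext; intro d
  rw [coeff_Psi Ψ hΨ, MvPowerSeries.X_pow_eq, MvPowerSeries.coeff_monomial]
  have hX : (MvPowerSeries.X 0 : MvPowerSeries (Fin 2) R) = mono 1 0 := by
    rw [← X_pow_mul_X_pow, pow_one, pow_zero, mul_one]
  by_cases hd : d = Finsupp.single 0 c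
  · have hd0 : d 0 = c := by rw [hd, Finsupp.single_eq_same]
    have hd1 : d 1 = 0 := by
      rw [hd]; exact Finsupp.single_eq_of_ne (by decide)
    rw [if_pos ⟨by rw [hd0], by rw [hd1]; exact dvd_zero e⟩, if_pos hd]
    have : pair (d 0 / c) (d 1 / e) = Finsupp.single 0 1 := by
      rw [hd0, hd1, Nat.div_self hc, Nat.zero_div, pair]
      rw [Finsupp.single_zero, add_zero]
    rw [hX, mono, this, MvPowerSeries.coeff_monomial,
      if_pos (show Finsupp.single 0 1 = pair 1 0 from
        (by rw [pair, Finsupp.single_zero, add_zero]))]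
  · rw [if_neg hd]
    by_cases hdvd : c ∣ d 0 ∧ e ∣ d 1
    · rw [if_pos hdvd, hX, mono, MvPowerSeries.coeff_monomial, if_neg]
      intro hpair
      apply hd
      have h0 : d 0 / c = 1 := by
        have := congrArg (fun m => m 0) hpair
        simpa [pair_apply_zero] using this
      have h1 : d 1 / e = 0 := by
        have := congrArg (fun m => m 1) hpair
        simpa [pair_apply_one] using this
      have hd0 : d 0 = c := by
        obtain ⟨q, hq⟩ := hdvd.1
        rw [hq] at h0 ⊢
        rw [Nat.mul_div_cancel_left _ hc] at h0
        rw [h0, mul_one]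
      have hd1 : d 1 = 0 := by
        obtain ⟨q, hq⟩ := hdvd.2
        rw [hq] at h1 ⊢
        rw [Nat.mul_div_cancel_left _ he] at h1
        rw [h1, mul_zero]
      rw [← pair_eval d, hd0, hd1, pair, Finsupp.single_zero, add_zero]
    · rw [if_neg hdvd]


lemma Psi_X1 (hc : 0 < c) (he : 0 < e) :
    Ψ (MvPowerSeries.X 1) = (MvPowerSeries.X 1 : MvPowerSeries (Fin 2) R) ^ e := by
  apply MvPowerSeries.ext; intro d
  rw [coeff_Psi Ψ hΨ, MvPowerSeries.X_pow_eq, MvPowerSeries.coeff_monomial]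
  have hX : (MvPowerSeries.X 1 : MvPowerSeries (Fin 2) R) = mono 0 1 := by
    rw [← X_pow_mul_X_pow, pow_one, pow_zero, one_mul]
  by_cases hd : d = Finsupp.single 1 e
  · have hd1 : d 1 = e := by rw [hd, Finsupp.single_eq_same]
    have hd0 : d 0 = 0 := by
      rw [hd]; exact Finsupp.single_eq_of_ne (by decide)
    rw [if_pos ⟨by rw [hd0]; exact dvd_zero c, by rw [hd1]⟩, if_pos hd]
    have : pair (d 0 / c) (d 1 / e) = Finsupp.single 1 1 := by
      rw [hd0, hd1, Nat.div_self he, Nat.zero_div, pair]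
      rw [Finsupp.single_zero, zero_add]
    rw [hX, mono, this, MvPowerSeries.coeff_monomial,
      if_pos (show Finsupp.single 1 1 = pair 0 1 from
        (by rw [pair, Finsupp.single_zero, zero_add]))]
  · rw [if_neg hd]
    by_cases hdvd : c ∣ d 0 ∧ e ∣ d 1
    · rw [if_pos hdvd, hX, mono, MvPowerSeries.coeff_monomial, if_neg]
      intro hpair
      apply hd
      have h0 : d 0 / c = 0 := by
        have := congrArg (fun m => m 0) hpair
        simpa [pair_apply_zero] using this
      have h1 : d 1 / e = 1 := by
        have := congrArg (fun m => m 1) hpair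
        simpa [pair_apply_one] using this
      have hd0 : d 0 = 0 := by
        obtain ⟨q, hq⟩ := hdvd.1
        rw [hq] at h0 ⊢
        rw [Nat.mul_div_cancel_left _ hc] at h0
        rw [h0, mul_zero]
      have hd1 : d 1 = e := by
        obtain ⟨q, hq⟩ := hdvd.2
        rw [hq] at h1 ⊢
        rw [Nat.mul_div_cancel_left _ he] at h1
        rw [h1, mul_one]
      rw [← pair_eval d, hd0, hd1, pair, Finsupp.single_zero, zero_add]
    · rw [if_neg hdvd]


lemma decomposition (hc : 0 < c) (he : 0 < e) (g : MvPowerSeries (Fin 2) R) :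
    ∑ x ∈ Finset.range c ×ˢ Finset.range e,
      mono x.1 x.2 * Ψ (Tc c e x.1 x.2 g) = g := by
  apply MvPowerSeries.ext; intro d
  rw [map_sum]
  have hterm : ∀ i j : ℕ,
      MvPowerSeries.coeff (R := R) d (mono i j * Ψ (Tc c e i j g)) =
        if i ≤ d 0 ∧ j ≤ d 1 ∧ c ∣ d 0 - i ∧ e ∣ d 1 - j then
          MvPowerSeries.coeff (R := R) d g else 0 := by
    intro i j
    rw [mono, MvPowerSeries.coeff_monomial_mul]
    by_cases h1 : pair i j ≤ d
    · obtain ⟨h0, h1'⟩ := pair_le_iff.1 h1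
      rw [if_pos h1, sub_pair, coeff_Psi Ψ hΨ]
      simp only [pair_apply_zero, pair_apply_one]
      by_cases h2 : c ∣ d 0 - i ∧ e ∣ d 1 - j
      · rw [if_pos h2, if_pos ⟨h0, h1', h2.1, h2.2⟩, one_mul, coeff_Tc]
        simp only [pair_apply_zero, pair_apply_one]
        have hidx : pair (c * ((d 0 - i) / c) + i) (e * ((d 1 - j) / e) + j) = d := by
          rw [Nat.mul_div_cancel' h2.1, Nat.mul_div_cancel' h2.2,
            Nat.sub_add_cancel h0, Nat.sub_add_cancel h1']
          exact pair_eval d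
        rw [hidx]
      · rw [if_neg h2, mul_zero, if_neg (fun hh => h2 ⟨hh.2.2.1, hh.2.2.2⟩)]
    · rw [if_neg h1, if_neg (fun hh => h1 (pair_le_iff.2 ⟨hh.1, hh.2.1⟩))]
  simp only [hterm]
  rw [Finset.sum_eq_single (d 0 % c, d 1 % e)]
  · rw [if_pos]
    exact ⟨Nat.mod_le _ _, Nat.mod_le _ _, Nat.dvd_sub_mod _, Nat.dvd_sub_mod _⟩
  · rintro ⟨i, j⟩ hmem hne
    rw [if_neg]
    rintro ⟨hi, hj, hdi, hdj⟩
    apply hne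
    obtain ⟨hmem1, hmem2⟩ := Finset.mem_product.1 hmem
    rw [Finset.mem_range] at hmem1 hmem2
    obtain ⟨q, hq⟩ := hdi
    obtain ⟨r, hr⟩ := hdj
    have h1 : d 0 = i + c * q := by
      rw [← hq, add_comm, Nat.sub_add_cancel hi]
    have h2 : d 1 = j + e * r := by
      rw [← hr, add_comm, Nat.sub_add_cancel hj]
    have e1 : d 0 % c = i := by
      rw [h1, Nat.add_mul_mod_self_left, Nat.mod_eq_of_lt hmem1]
    have e2 : d 1 % e = j := by
      rw [h2, Nat.add_mul_mod_self_left, Nat.mod_eq_of_lt hmem2]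
    rw [e1, e2]
  · intro habs
    exact absurd (Finset.mem_product.2
      ⟨Finset.mem_range.2 (Nat.mod_lt _ hc), Finset.mem_range.2 (Nat.mod_lt _ he)⟩) habs

end Psi


lemma C_mul_cancel {π : R} (hπ0 : π ≠ 0) [IsDomain R]
    {x y : MvPowerSeries (Fin 2) R}
    (h : MvPowerSeries.C (σ := Fin 2) (R := R) π * x = MvPowerSeries.C (σ := Fin 2) (R := R) π * y) : x = y := by
  apply MvPowerSeries.ext; intro d
  have := congrArg (MvPowerSeries.coeff (R := R) d) h
  rw [MvPowerSeries.coeff_C_mul, MvPowerSeries.coeff_C_mul] at this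
  exact mul_left_cancel₀ hπ0 this

lemma descent [IsDomain R] (π : R) (hπ0 : π ≠ 0) (m a b : ℕ) (hm : 0 < m) (M : ℕ) :
    ∀ f h : MvPowerSeries (Fin 2) R,
      (MvPowerSeries.C (σ := Fin 2) (R := R) π) ^ M * f =
        ((MvPowerSeries.C (σ := Fin 2) (R := R) π) ^ m - mono a b) * h →
      ((MvPowerSeries.C (σ := Fin 2) (R := R) π) ^ m - mono a b) ∣ f := by
  induction M with
  | zero =>
    intro f h hf
    rw [pow_zero, one_mul] at hf
    exact Dvd.intro h hf.symm
  | succ M ih =>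
    intro f h hf
    have key : ∀ d : Fin 2 →₀ ℕ, π ∣ MvPowerSeries.coeff (R := R) d h := by
      intro d
      have h1 := congrArg (MvPowerSeries.coeff (R := R) (pair a b + d)) hf
      rw [← map_pow, MvPowerSeries.coeff_C_mul, sub_mul, map_sub, ← map_pow,
        MvPowerSeries.coeff_C_mul, mono, MvPowerSeries.coeff_add_monomial_mul, one_mul] at h1
      have h2 : MvPowerSeries.coeff (R := R) d h =
          π ^ m * MvPowerSeries.coeff (R := R) (pair a b + d) h -
            π ^ (M + 1) * MvPowerSeries.coeff (R := R) (pair a b + d) f := by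
        linear_combination h1
      rw [h2]
      exact dvd_sub
        (Dvd.dvd.mul_right (dvd_pow_self π hm.ne') _)
        (Dvd.dvd.mul_right (dvd_pow_self π (Nat.succ_ne_zero M)) _)
    choose q hq using key
    set h₁ : MvPowerSeries (Fin 2) R := (fun d => q d : (Fin 2 →₀ ℕ) → R) with hh₁
    have hsplit : h = MvPowerSeries.C (σ := Fin 2) (R := R) π * h₁ := by
      apply MvPowerSeries.ext; intro d
      rw [MvPowerSeries.coeff_C_mul, hq d]
      rfl
    have hc : MvPowerSeries.C (σ := Fin 2) (R := R) π * ((MvPowerSeries.C (σ := Fin 2) (R := R) π) ^ M * f) =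
        MvPowerSeries.C (σ := Fin 2) (R := R) π *
          (((MvPowerSeries.C (σ := Fin 2) (R := R) π) ^ m - mono a b) * h₁) := by
      rw [← mul_assoc, ← pow_succ']
      rw [hf, hsplit]
      ring
    exact ih f h₁ (C_mul_cancel hπ0 hc)

lemma not_dvd_C_pow [IsDomain R] (π : R) (hπ : ¬ IsUnit π) (hπ0 : π ≠ 0)
    (m a b : ℕ) (hm : 0 < m) (ha : 0 < a) (M : ℕ) :
    ¬ (((MvPowerSeries.C (σ := Fin 2) (R := R) π) ^ m - mono a b) ∣ (MvPowerSeries.C (σ := Fin 2) (R := R) π) ^ M) := by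
  intro hdvd
  have h1 : ((MvPowerSeries.C (σ := Fin 2) (R := R) π) ^ m - mono a b) ∣ 1 := by
    obtain ⟨g, hg⟩ := hdvd
    have := descent π hπ0 m a b hm M 1 g (by rw [mul_one, hg])
    exact this
  obtain ⟨g, hg⟩ := h1
  have h2 := congrArg (MvPowerSeries.constantCoeff (σ := Fin 2) (R := R)) hg
  rw [map_one, map_mul, map_sub, map_pow, MvPowerSeries.constantCoeff_C, mono] at h2
  have h3 : MvPowerSeries.constantCoeff (σ := Fin 2) (R := R) (MvPowerSeries.monomial (R := R) (pair a b) 1) = 0 := by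
    rw [← MvPowerSeries.coeff_zero_eq_constantCoeff_apply, MvPowerSeries.coeff_monomial, if_neg]
    intro hh
    have := congrArg (fun m => m 0) hh
    simp only [pair_apply_zero, Finsupp.coe_zero, Pi.zero_apply] at this
    omega
  rw [h3, sub_zero] at h2
  apply hπ
  apply isUnit_of_mul_isUnit_left (y := π ^ (m - 1) * MvPowerSeries.constantCoeff (σ := Fin 2) (R := R) g)
  rw [← mul_assoc, ← pow_succ', Nat.sub_add_cancel hm]
  rw [← h2]
  exact isUnit_one

lemma bezout {c a : ℕ} (hco : Nat.Coprime c a) (ha : 0 < a) (hc : 0 < c) :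
    ∃ k m : ℕ, k * c = 1 + m * a := by
  have hb := Nat.gcd_eq_gcd_ab c a
  rw [hco] at hb
  set x := Nat.gcdA c a
  set y := Nat.gcdB c a
  set K : ℤ := |x| + |y| + 1 with hK
  have hknn : (0:ℤ) ≤ x + a * K := by
    have h1 : (1:ℤ) ≤ a := by exact_mod_cast ha
    nlinarith [abs_nonneg x, abs_nonneg y, le_abs_self x, neg_abs_le x]
  have hmnn : (0:ℤ) ≤ c * K - y := by
    have h1 : (1:ℤ) ≤ c := by exact_mod_cast hc
    nlinarith [abs_nonneg x, abs_nonneg y, le_abs_self y, neg_abs_le y]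
  refine ⟨(x + a * K).toNat, (c * K - y).toNat, ?_⟩
  have : ((x + a * K).toNat : ℤ) * c = 1 + ((c * K - y).toNat : ℤ) * a := by
    rw [Int.toNat_of_nonneg hknn, Int.toNat_of_nonneg hmnn]
    have : (1:ℤ) = c * x + a * y := by exact_mod_cast hb
    nlinarith [this]
  exact_mod_cast this

end stmt5aux

set_option maxHeartbeats 2000000 in
/-- Let `R` be a complete discrete valuation ring with uniformizer `π`
whose residue field is algebraically closed of characteristic `p ≥ 0`.  Let `n', a', b'`
be positive integers with `n'` not divisible by `p` and `gcd(a', b', n') = 1`.  Set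
`e = gcd(n', a')`, `c = gcd(n', b')`, `n'' = n'/(e·c)`, `a'' = a'/e`, `b'' = b'/c`.
Let `Ψ : R[[u,v]] → R[[s,t]]` be the `R`-algebra homomorphism determined by `u ↦ s^c`
and `v ↦ t^e` (characterized on coefficients: the coefficient of `s^i t^j` in `Ψ f` is
the coefficient of `u^{i/c} v^{j/e}` in `f` if `c ∣ i` and `e ∣ j`, and `0` otherwise).
Then `Ψ` induces an injective ring homomorphism from
`A = R[[u,v]]/(π^{n'} − u^{a'}·v^{b'})` to `B = R[[s,t]]/(π^{n''} − s^{a''}·t^{b''})`,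
`B` is a finite `A`-module generated by the monomials `s^i t^j` with `0 ≤ i < c` and
`0 ≤ j < e`, and the induced map of fraction fields `Frac(A) → Frac(B)` is an
isomorphism (expressed by: the induced map is injective and every element of `B` is a
quotient of elements of its image). -/
theorem stmt_5
    (R : Type) [CommRing R] [IsDomain R] [IsDiscreteValuationRing R]
    [IsAdicComplete (IsLocalRing.maximalIdeal R) R]
    [IsAlgClosed (IsLocalRing.ResidueField R)]
    (p : ℕ) (hp : p = 0 ∨ p.Prime) [CharP (IsLocalRing.ResidueField R) p]
    (π : R) (hπ : Irreducible π)
    (n' a' b' : ℕ) (hn' : 0 < n') (ha' : 0 < a') (hb' : 0 < b')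
    (hpn : ¬ p ∣ n') (hgcd : Nat.gcd a' (Nat.gcd b' n') = 1)
    (e c n'' a'' b'' : ℕ)
    (he : e = Nat.gcd n' a') (hc : c = Nat.gcd n' b')
    (hn'' : n'' = n' / (e * c)) (ha'' : a'' = a' / e) (hb'' : b'' = b' / c)
    (Ψ : MvPowerSeries (Fin 2) R →ₐ[R] MvPowerSeries (Fin 2) R)
    (hΨ : ∀ (f : MvPowerSeries (Fin 2) R) (d : Fin 2 →₀ ℕ),
      MvPowerSeries.coeff (R := R) d (Ψ f) =
        if c ∣ d 0 ∧ e ∣ d 1 then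
          MvPowerSeries.coeff (R := R)
            (Finsupp.single 0 (d 0 / c) + Finsupp.single 1 (d 1 / e)) f
        else 0) :
    ∃ φ : stmt5.Q R π n' a' b' →+* stmt5.Q R π n'' a'' b'',
      (∀ f : MvPowerSeries (Fin 2) R,
        φ (Ideal.Quotient.mk (stmt5.I R π n' a' b') f)
          = Ideal.Quotient.mk (stmt5.I R π n'' a'' b'') (Ψ f)) ∧
      Function.Injective φ ∧
      (letI : Algebra (stmt5.Q R π n' a' b') (stmt5.Q R π n'' a'' b'') := φ.toAlgebra
       Submodule.span (stmt5.Q R π n' a' b')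
         {x : stmt5.Q R π n'' a'' b'' | ∃ i j : ℕ, i < c ∧ j < e ∧
           x = (Ideal.Quotient.mk (stmt5.I R π n'' a'' b'') (MvPowerSeries.X (0 : Fin 2))) ^ i
             * (Ideal.Quotient.mk (stmt5.I R π n'' a'' b'') (MvPowerSeries.X (1 : Fin 2))) ^ j}
         = ⊤) ∧
      (∀ y, ∃ a₁ a₂, φ a₂ ≠ 0 ∧ φ a₂ * y = φ a₁) := by
  classical
  open stmt5aux in

  -- positivity and divisibility facts
  have hcpos : 0 < c := hc ▸ Nat.gcd_pos_of_pos_left b' hn'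
  have hepos : 0 < e := he ▸ Nat.gcd_pos_of_pos_left a' hn'
  have hea : e ∣ a' := he ▸ Nat.gcd_dvd_right n' a'
  have hen : e ∣ n' := he ▸ Nat.gcd_dvd_left n' a'
  have hcb : c ∣ b' := hc ▸ Nat.gcd_dvd_right n' b'
  have hcn : c ∣ n' := hc ▸ Nat.gcd_dvd_left n' b'
  have ha'e : a'' * e = a' := by rw [ha'']; exact Nat.div_mul_cancel hea
  have hb'c : b'' * c = b' := by rw [hb'']; exact Nat.div_mul_cancel hcb
  have hcop_ce : Nat.Coprime c e := by
    have hd : Nat.gcd c e ∣ Nat.gcd a' (Nat.gcd b' n') :=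
      Nat.dvd_gcd ((Nat.gcd_dvd_right c e).trans hea)
        (Nat.dvd_gcd ((Nat.gcd_dvd_left c e).trans hcb) ((Nat.gcd_dvd_left c e).trans hcn))
    rw [hgcd] at hd
    exact Nat.dvd_one.mp hd
  have hcop_ca : Nat.Coprime c a' := by
    have hd : Nat.gcd c a' ∣ Nat.gcd a' (Nat.gcd b' n') :=
      Nat.dvd_gcd (Nat.gcd_dvd_right c a')
        (Nat.dvd_gcd ((Nat.gcd_dvd_left c a').trans hcb) ((Nat.gcd_dvd_left c a').trans hcn))
    rw [hgcd] at hd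
    exact Nat.dvd_one.mp hd
  have hcop_eb : Nat.Coprime e b' := by
    have hd : Nat.gcd e b' ∣ Nat.gcd a' (Nat.gcd b' n') :=
      Nat.dvd_gcd ((Nat.gcd_dvd_left e b').trans hea)
        (Nat.dvd_gcd (Nat.gcd_dvd_right e b') ((Nat.gcd_dvd_left e b').trans hen))
    rw [hgcd] at hd
    exact Nat.dvd_one.mp hd
  have hcop_ca'' : Nat.Coprime c a'' :=
    Nat.Coprime.coprime_dvd_right ⟨e, ha'e.symm⟩ hcop_ca
  have hcop_eb'' : Nat.Coprime e b'' :=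
    Nat.Coprime.coprime_dvd_right ⟨c, hb'c.symm⟩ hcop_eb
  have hecn : e * c ∣ n' := Nat.Coprime.mul_dvd_of_dvd_of_dvd hcop_ce.symm hen hcn
  have hn'ec : n'' * (e * c) = n' := by rw [hn'']; exact Nat.div_mul_cancel hecn
  have hn''pos : 0 < n'' :=
    Nat.pos_of_ne_zero (fun h => by rw [h, zero_mul] at hn'ec; omega)
  have ha''pos : 0 < a'' :=
    Nat.pos_of_ne_zero (fun h => by rw [h, zero_mul] at ha'e; omega)
  have hb''pos : 0 < b'' :=
    Nat.pos_of_ne_zero (fun h => by rw [h, zero_mul] at hb'c; omega)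
  have hπ0 : π ≠ 0 := hπ.ne_zero
  -- basic series
  have hPsiX0 : Ψ (MvPowerSeries.X 0) = (MvPowerSeries.X 0 : MvPowerSeries (Fin 2) R) ^ c :=
    Psi_X0 Ψ hΨ hcpos hepos
  have hPsiX1 : Ψ (MvPowerSeries.X 1) = (MvPowerSeries.X 1 : MvPowerSeries (Fin 2) R) ^ e :=
    Psi_X1 Ψ hΨ hcpos hepos
  set x : MvPowerSeries (Fin 2) R := (MvPowerSeries.C (σ := Fin 2) (R := R) π) ^ n'' with hxdef
  set y : MvPowerSeries (Fin 2) R := mono a'' b'' with hydef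
  set N : ℕ := e * c with hNdef
  have hNpos : 0 < N := Nat.mul_pos hepos hcpos
  have ex1 : a'' * N = c * a' := by rw [hNdef, ← mul_assoc, ha'e, mul_comm]
  have ex2 : b'' * N = e * b' := by rw [hNdef, mul_comm e c, ← mul_assoc, hb'c, mul_comm]
  have hx : x ^ N = (MvPowerSeries.C (σ := Fin 2) (R := R) π) ^ n' := by
    rw [hxdef, ← pow_mul, hn'ec]
  have hy : y ^ N = mono (c * a') (e * b') := by
    rw [hydef, ← X_pow_mul_X_pow, mul_pow, ← pow_mul, ← pow_mul, ex1, ex2, X_pow_mul_X_pow]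
  have hymono : y = MvPowerSeries.X 0 ^ a'' * MvPowerSeries.X 1 ^ b'' :=
    (X_pow_mul_X_pow a'' b'').symm
  have hΨP' : Ψ ((MvPowerSeries.C (σ := Fin 2) (R := R) π) ^ n' -
      MvPowerSeries.X 0 ^ a' * MvPowerSeries.X 1 ^ b') = x ^ N - y ^ N := by
    rw [map_sub, map_pow, Psi_C Ψ, map_mul, map_pow, map_pow, hPsiX0, hPsiX1, hx, hy,
      ← pow_mul, ← pow_mul, X_pow_mul_X_pow]
  -- the induced hom
  have hker : ∀ f ∈ stmt5.I R π n' a' b',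
      Ψ f ∈ stmt5.I R π n'' a'' b'' := by
    intro f hf
    obtain ⟨g, hg⟩ := Ideal.mem_span_singleton.mp hf
    refine Ideal.mem_span_singleton.mpr ?_
    rw [hg, map_mul, hΨP']
    have hdvd : (MvPowerSeries.C (σ := Fin 2) (R := R) π) ^ n'' -
        MvPowerSeries.X 0 ^ a'' * MvPowerSeries.X 1 ^ b'' ∣ x ^ N - y ^ N := by
      rw [← hymono, ← hxdef]
      exact sub_dvd_pow_sub_pow x y N
    exact hdvd.mul_right _
  set φ : stmt5.Q R π n' a' b' →+* stmt5.Q R π n'' a'' b'' :=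
    Ideal.Quotient.lift (stmt5.I R π n' a' b')
      ((Ideal.Quotient.mk (stmt5.I R π n'' a'' b'')).comp Ψ.toRingHom)
      (fun f hf => by
        rw [RingHom.comp_apply]
        exact Ideal.Quotient.eq_zero_iff_mem.mpr (hker f hf)) with hφdef
  have hφ : ∀ f : MvPowerSeries (Fin 2) R,
      φ (Ideal.Quotient.mk (stmt5.I R π n' a' b') f)
        = Ideal.Quotient.mk (stmt5.I R π n'' a'' b'') (Ψ f) := fun f => rfl
  refine ⟨φ, hφ, ?_, ?_, ?_⟩
  -- Injectivity
  case _ =>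
    refine (injective_iff_map_eq_zero φ).mpr ?_
    intro z hz
    obtain ⟨f, rfl⟩ := Ideal.Quotient.mk_surjective z
    rw [hφ f, Ideal.Quotient.eq_zero_iff_mem] at hz
    obtain ⟨g, hg⟩ := Ideal.mem_span_singleton.mp hz
    rw [Ideal.Quotient.eq_zero_iff_mem]
    refine Ideal.mem_span_singleton.mpr ?_
    set Q : MvPowerSeries (Fin 2) R := ∑ i ∈ Finset.range N, x ^ i * y ^ (N - 1 - i) with hQdef
    have hgeom : Q * (x - y) = x ^ N - y ^ N := geom_sum₂_mul x y N
    have hg' : Ψ f = (x - y) * g := by rw [hg, ← hymono, ← hxdef]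
    have hmain : Ψ ((MvPowerSeries.C (σ := Fin 2) (R := R) π) ^ n' -
        MvPowerSeries.X 0 ^ a' * MvPowerSeries.X 1 ^ b') * g = Ψ f * Q := by
      rw [hΨP', ← hgeom, hg']; ring
    set Mm : ℕ := n'' * (N - 1) with hMmdef
    have hT1 : T c e (Ψ ((MvPowerSeries.C (σ := Fin 2) (R := R) π) ^ n' -
        MvPowerSeries.X 0 ^ a' * MvPowerSeries.X 1 ^ b') * g)
        = ((MvPowerSeries.C (σ := Fin 2) (R := R) π) ^ n' -
            MvPowerSeries.X 0 ^ a' * MvPowerSeries.X 1 ^ b') * T c e g := by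
      rw [hΨP', hx, hy, sub_mul, T_sub, ← map_pow, T_C_mul, T_monomial_mul hcpos hepos a' b',
        map_pow, X_pow_mul_X_pow, ← sub_mul]
    have hT2 : T c e (Ψ f * Q) = MvPowerSeries.C (σ := Fin 2) (R := R) (π ^ Mm) * f := by
      rw [hQdef, Finset.mul_sum, T_sum]
      rw [Finset.sum_eq_single_of_mem (N - 1) (Finset.mem_range.mpr (by omega))]
      · have hxpow : x ^ (N - 1) = MvPowerSeries.C (σ := Fin 2) (R := R) (π ^ Mm) := by
          rw [hxdef, ← pow_mul, map_pow, hMmdef]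
        rw [Nat.sub_self, pow_zero, mul_one, hxpow, mul_comm (Ψ f), T_C_mul,
          T_Psi Ψ hΨ hcpos hepos]
      · intro i hi hne
        rw [Finset.mem_range] at hi
        have hk1 : 0 < N - 1 - i := by omega
        have hk2 : N - 1 - i ≤ N - 1 := by omega
        set k : ℕ := N - 1 - i with hkdef
        have hxi : x ^ i = MvPowerSeries.C (σ := Fin 2) (R := R) (π ^ (n'' * i)) := by
          rw [hxdef, ← pow_mul, map_pow]
        have hyk : y ^ k = mono (a'' * k) (b'' * k) := by
          rw [hydef, ← X_pow_mul_X_pow, mul_pow, ← pow_mul, ← pow_mul, X_pow_mul_X_pow]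
        have hcond : ¬ (c ∣ a'' * k ∧ e ∣ b'' * k) := by
          rintro ⟨h1, h2⟩
          have hck : c ∣ k := hcop_ca''.dvd_of_dvd_mul_left h1
          have hek : e ∣ k := hcop_eb''.dvd_of_dvd_mul_left h2
          have hexc : e * c ∣ k := Nat.Coprime.mul_dvd_of_dvd_of_dvd hcop_ce.symm hek hck
          have := Nat.le_of_dvd hk1 hexc
          omega
        have hre : Ψ f * (x ^ i * y ^ k) =
            MvPowerSeries.C (σ := Fin 2) (R := R) (π ^ (n'' * i)) * (Ψ f * mono (a'' * k) (b'' * k)) := by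
          rw [hxi, hyk]; ring
        rw [hre, T_C_mul, T_Psi_mul_monomial_eq_zero Ψ hΨ _ _ hcond f, mul_zero]
    have hcomb := congrArg (T c e) hmain
    rw [hT1, hT2] at hcomb
    have hfinal : (MvPowerSeries.C (σ := Fin 2) (R := R) π) ^ Mm * f
        = ((MvPowerSeries.C (σ := Fin 2) (R := R) π) ^ n' - mono a' b') * T c e g := by
      rw [map_pow] at hcomb
      rw [← hcomb, X_pow_mul_X_pow]
    have hdesc := descent π hπ0 n' a' b' hn' Mm f (T c e g) hfinal
    rw [← X_pow_mul_X_pow] at hdesc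
    exact hdesc
  case _ =>
    letI : Algebra (stmt5.Q R π n' a' b') (stmt5.Q R π n'' a'' b'') := φ.toAlgebra
    show Submodule.span (stmt5.Q R π n' a' b')
        {w : stmt5.Q R π n'' a'' b'' | ∃ i j : ℕ, i < c ∧ j < e ∧
          w = (Ideal.Quotient.mk (stmt5.I R π n'' a'' b'') (MvPowerSeries.X (0 : Fin 2))) ^ i
            * (Ideal.Quotient.mk (stmt5.I R π n'' a'' b'') (MvPowerSeries.X (1 : Fin 2))) ^ j}
        = ⊤
    rw [Submodule.eq_top_iff']
    intro z
    obtain ⟨g, rfl⟩ := Ideal.Quotient.mk_surjective z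
    rw [← decomposition Ψ hΨ hcpos hepos g, map_sum]
    refine Submodule.sum_mem _ ?_
    intro ij hij
    obtain ⟨hij1, hij2⟩ := Finset.mem_product.mp hij
    rw [Finset.mem_range] at hij1 hij2
    rw [map_mul, ← hφ (Tc c e ij.1 ij.2 g)]
    have hsm : Ideal.Quotient.mk (stmt5.I R π n'' a'' b'') (mono ij.1 ij.2) *
        φ (Ideal.Quotient.mk (stmt5.I R π n' a' b') (Tc c e ij.1 ij.2 g)) =
        (Ideal.Quotient.mk (stmt5.I R π n' a' b') (Tc c e ij.1 ij.2 g)) •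
          (Ideal.Quotient.mk (stmt5.I R π n'' a'' b'') (mono ij.1 ij.2)) := by
      rw [Algebra.smul_def, RingHom.algebraMap_toAlgebra]
      ring
    rw [hsm]
    refine Submodule.smul_mem _ _ (Submodule.subset_span ?_)
    exact ⟨ij.1, ij.2, hij1, hij2, by rw [← X_pow_mul_X_pow, map_mul, map_pow, map_pow]⟩
  case _ =>
    intro z
    obtain ⟨g, rfl⟩ := Ideal.Quotient.mk_surjective z
    set mkA : MvPowerSeries (Fin 2) R →+* stmt5.Q R π n' a' b' :=
      Ideal.Quotient.mk (stmt5.I R π n' a' b') with hmkA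
    set pb : stmt5.Q R π n'' a'' b'' :=
      Ideal.Quotient.mk (stmt5.I R π n'' a'' b'') (MvPowerSeries.C (σ := Fin 2) (R := R) π) with hpbdef
    set sv : stmt5.Q R π n'' a'' b'' :=
      Ideal.Quotient.mk (stmt5.I R π n'' a'' b'') (MvPowerSeries.X 0) with hsdef
    set tv : stmt5.Q R π n'' a'' b'' :=
      Ideal.Quotient.mk (stmt5.I R π n'' a'' b'') (MvPowerSeries.X 1) with htdef
    have hrel : pb ^ n'' = sv ^ a'' * tv ^ b'' := by
      have hmem : (MvPowerSeries.C (σ := Fin 2) (R := R) π) ^ n''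
          - MvPowerSeries.X 0 ^ a'' * MvPowerSeries.X 1 ^ b'' ∈ stmt5.I R π n'' a'' b'' :=
        Ideal.subset_span rfl
      have h0 := Ideal.Quotient.eq_zero_iff_mem.mpr hmem
      rw [map_sub, sub_eq_zero, map_pow, map_mul, map_pow, map_pow] at h0
      exact h0
    have hφC : φ (mkA (MvPowerSeries.C (σ := Fin 2) (R := R) π)) = pb := by
      rw [hmkA, hpbdef]
      show φ (Ideal.Quotient.mk (stmt5.I R π n' a' b') (MvPowerSeries.C (σ := Fin 2) (R := R) π)) = _
      rw [hφ, Psi_C Ψ]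
    obtain ⟨k1, m1, hk1⟩ := bezout hcop_ca ha' hcpos
    obtain ⟨k2, m2, hk2⟩ := bezout hcop_eb hb' hepos
    set α : stmt5.Q R π n' a' b' :=
      mkA (MvPowerSeries.X 0 ^ k1 * MvPowerSeries.X 1 ^ (b'' * m1)) with hαdef
    set β : stmt5.Q R π n' a' b' :=
      mkA (MvPowerSeries.X 0 ^ (a'' * m2) * MvPowerSeries.X 1 ^ k2) with hβdef
    have hφα : φ α = (sv ^ c) ^ k1 * (tv ^ e) ^ (b'' * m1) := by
      rw [hαdef, hmkA, hsdef, htdef]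
      show φ (Ideal.Quotient.mk (stmt5.I R π n' a' b') _) = _
      rw [hφ]
      simp only [map_mul, map_pow, hPsiX0, hPsiX1]
    have hφβ : φ β = (sv ^ c) ^ (a'' * m2) * (tv ^ e) ^ k2 := by
      rw [hβdef, hmkA, hsdef, htdef]
      show φ (Ideal.Quotient.mk (stmt5.I R π n' a' b') _) = _
      rw [hφ]
      simp only [map_mul, map_pow, hPsiX0, hPsiX1]
    have e3 : 1 + a'' * (e * m1) = c * k1 := by
      rw [← mul_assoc, ha'e, mul_comm c k1, hk1, mul_comm m1 a']
    have e4 : 1 + b'' * (c * m2) = e * k2 := by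
      rw [← mul_assoc, hb'c, mul_comm e k2, hk2, mul_comm m2 b']
    have hs : sv * pb ^ (n'' * (e * m1)) = φ α := by
      rw [hφα]
      calc sv * pb ^ (n'' * (e * m1)) = sv * (pb ^ n'') ^ (e * m1) := by rw [← pow_mul]
        _ = sv * (sv ^ a'' * tv ^ b'') ^ (e * m1) := by rw [hrel]
        _ = sv ^ (1 + a'' * (e * m1)) * tv ^ (b'' * (e * m1)) := by ring
        _ = (sv ^ c) ^ k1 * (tv ^ e) ^ (b'' * m1) := by
            rw [e3]; ring
    have ht : tv * pb ^ (n'' * (c * m2)) = φ β := by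
      rw [hφβ]
      calc tv * pb ^ (n'' * (c * m2)) = tv * (pb ^ n'') ^ (c * m2) := by rw [← pow_mul]
        _ = tv * (sv ^ a'' * tv ^ b'') ^ (c * m2) := by rw [hrel]
        _ = sv ^ (a'' * (c * m2)) * tv ^ (1 + b'' * (c * m2)) := by ring
        _ = (sv ^ c) ^ (a'' * m2) * (tv ^ e) ^ k2 := by
            rw [e4]; ring
    have hsums : ∀ i j : ℕ,
        sv ^ i * tv ^ j * pb ^ (i * (n'' * (e * m1)) + j * (n'' * (c * m2)))
          = φ (α ^ i * β ^ j) := by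
      intro i j
      rw [map_mul, map_pow, map_pow, ← hs, ← ht]
      ring
    set NN : ℕ := c * (n'' * (e * m1)) + e * (n'' * (c * m2)) with hNNdef
    refine ⟨∑ ij ∈ Finset.range c ×ˢ Finset.range e,
        α ^ ij.1 * β ^ ij.2 *
          ((mkA (MvPowerSeries.C (σ := Fin 2) (R := R) π))
              ^ (NN - (ij.1 * (n'' * (e * m1)) + ij.2 * (n'' * (c * m2)))) *
            mkA (Tc c e ij.1 ij.2 g)),
      (mkA (MvPowerSeries.C (σ := Fin 2) (R := R) π)) ^ NN, ?_, ?_⟩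
    · rw [map_pow, hφC]
      intro h0
      rw [hpbdef, ← map_pow, Ideal.Quotient.eq_zero_iff_mem] at h0
      have hdvd := Ideal.mem_span_singleton.mp h0
      rw [X_pow_mul_X_pow] at hdvd
      exact not_dvd_C_pow π hπ.not_isUnit hπ0 n'' a'' b'' hn''pos ha''pos NN hdvd
    · rw [map_pow, hφC]
      conv_lhs => rw [← decomposition Ψ hΨ hcpos hepos g]
      rw [map_sum, Finset.mul_sum, map_sum]
      refine Finset.sum_congr rfl ?_
      intro ij hij
      obtain ⟨hij1, hij2⟩ := Finset.mem_product.mp hij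
      rw [Finset.mem_range] at hij1 hij2
      rw [map_mul, map_mul, map_mul, ← hφ (Tc c e ij.1 ij.2 g)]
      have hmk : Ideal.Quotient.mk (stmt5.I R π n'' a'' b'') (mono ij.1 ij.2)
          = sv ^ ij.1 * tv ^ ij.2 := by
        rw [hsdef, htdef, ← X_pow_mul_X_pow, map_mul, map_pow, map_pow]
      rw [hmk]
      have hle : ij.1 * (n'' * (e * m1)) + ij.2 * (n'' * (c * m2)) ≤ NN := by
        rw [hNNdef]
        exact Nat.add_le_add (Nat.mul_le_mul_right _ hij1.le) (Nat.mul_le_mul_right _ hij2.le)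
      have hpowsplit : pb ^ NN =
          pb ^ (ij.1 * (n'' * (e * m1)) + ij.2 * (n'' * (c * m2))) *
            pb ^ (NN - (ij.1 * (n'' * (e * m1)) + ij.2 * (n'' * (c * m2)))) := by
        rw [← pow_add, Nat.add_sub_cancel' hle]
      calc pb ^ NN * (sv ^ ij.1 * tv ^ ij.2 * φ (mkA (Tc c e ij.1 ij.2 g)))
          = (sv ^ ij.1 * tv ^ ij.2 *
              pb ^ (ij.1 * (n'' * (e * m1)) + ij.2 * (n'' * (c * m2)))) *
            (pb ^ (NN - (ij.1 * (n'' * (e * m1)) + ij.2 * (n'' * (c * m2)))) *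
              φ (mkA (Tc c e ij.1 ij.2 g))) := by
            rw [hpowsplit]; ring
        _ = φ (α ^ ij.1 * β ^ ij.2) *
            (φ ((mkA (MvPowerSeries.C (σ := Fin 2) (R := R) π))
                ^ (NN - (ij.1 * (n'' * (e * m1)) + ij.2 * (n'' * (c * m2))))) *
              φ (mkA (Tc c e ij.1 ij.2 g))) := by
            rw [hsums, map_pow, hφC]
        _ = φ (α ^ ij.1) * φ (β ^ ij.2) *
            φ ((mkA (MvPowerSeries.C (σ := Fin 2) (R := R) π))
                ^ (NN - (ij.1 * (n'' * (e * m1)) + ij.2 * (n'' * (c * m2)))) *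
              mkA (Tc c e ij.1 ij.2 g)) := by
            simp only [map_mul]
end

section
/- Let l ≥ 1 and let m₀, m₁, …, m_{l+1} be positive integers with m₀ = m_{l+1} = 1, such that for each i with 1 ≤ i ≤ l there exists an integer e_i with m_{i−1} + m_i·e_i + m_{i+1} = 0. Suppose i with 1 ≤ i ≤ l is such that m_i ≥ m_j for all 1 ≤ j ≤ l and m_i > 1. Then m_{i−1} < m_i, m_{i+1} < m_i, and e_i = −1. -/
/-- Let `l ≥ 1` and let `m₀, m₁, …, m_{l+1}` be positive integers with
`m₀ = m_{l+1} = 1`, such that for each `i` with `1 ≤ i ≤ l` there exists an integer `e_i`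
with `m_{i−1} + m_i·e_i + m_{i+1} = 0`.  Suppose `i` with `1 ≤ i ≤ l` is such that
`m_i ≥ m_j` for all `1 ≤ j ≤ l` and `m_i > 1`.  Then `m_{i−1} < m_i`, `m_{i+1} < m_i`,
and `e_i = −1`. -/
theorem stmt_14
    (l : ℕ) (hl : 1 ≤ l) (m : ℕ → ℕ)
    (hpos : ∀ j ≤ l + 1, 0 < m j)
    (hm0 : m 0 = 1) (hml : m (l + 1) = 1)
    (hrel : ∀ j, 1 ≤ j → j ≤ l → ∃ e : ℤ,
      (m (j - 1) : ℤ) + (m j : ℤ) * e + (m (j + 1) : ℤ) = 0)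
    (i : ℕ) (hi1 : 1 ≤ i) (hil : i ≤ l)
    (hmax : ∀ j, 1 ≤ j → j ≤ l → m j ≤ m i) (hbig : 1 < m i)
    (e : ℤ) (he : (m (i - 1) : ℤ) + (m i : ℤ) * e + (m (i + 1) : ℤ) = 0) :
    m (i - 1) < m i ∧ m (i + 1) < m i ∧ e = -1 := by
  have hMpos : (1 : ℤ) < (m i : ℤ) := by exact_mod_cast hbig
  -- downward propagation: a pair of adjacent maxima at (j, j+1) with j ≥ 1 is impossible
  have down : ∀ k : ℕ, ∀ j, 1 ≤ j → j ≤ l → m j = m i → m (j + 1) = m i →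
      j ≤ k → False := by
    intro k
    induction k with
    | zero => intro j hj1 _ _ _ hjk; omega
    | succ k ih =>
      intro j hj1 hjl hmj hmj1 hjk
      obtain ⟨e', he'⟩ := hrel j hj1 hjl
      have hprev : (m (j - 1) : ℤ) = (m i : ℤ) * (-e' - 1) := by
        rw [hmj, hmj1] at he'
        linear_combination he'
      rcases eq_or_lt_of_le hj1 with hj | hj
      · -- j = 1
        have h0 : m (j - 1) = 1 := by
          have hz : j - 1 = 0 := by omega
          rw [hz, hm0]
        rw [h0] at hprev
        push_cast at hprev
        rcases le_or_gt (-e' - 1) 0 with ht | ht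
        · have := mul_nonpos_of_nonneg_of_nonpos
            (by linarith : (0 : ℤ) ≤ (m i : ℤ)) ht
          linarith
        · have ht' : (1 : ℤ) ≤ -e' - 1 := ht
          have := mul_le_mul_of_nonneg_left ht'
            (by linarith : (0 : ℤ) ≤ (m i : ℤ))
          linarith
      · -- j ≥ 2
        have hj2 : 2 ≤ j := hj
        have hle : (m (j - 1) : ℤ) ≤ (m i : ℤ) := by
          exact_mod_cast hmax (j - 1) (by omega) (by omega)
        have hposj : (0 : ℤ) < (m (j - 1) : ℤ) := by
          exact_mod_cast hpos (j - 1) (by omega)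
        have ht1 : (-e' - 1) = 1 := by
          have hlo : (1 : ℤ) ≤ -e' - 1 := by
            by_contra h
            push_neg at h
            have h0 : -e' - 1 ≤ 0 := by omega
            have := mul_nonpos_of_nonneg_of_nonpos
              (by linarith : (0 : ℤ) ≤ (m i : ℤ)) h0
            linarith
          have hhi : -e' - 1 ≤ 1 := by
            by_contra h
            push_neg at h
            have h2 : (2 : ℤ) ≤ -e' - 1 := by omega
            have := mul_le_mul_of_nonneg_left h2
              (by linarith : (0 : ℤ) ≤ (m i : ℤ))
            linarith
          omega
        have hprevM : m (j - 1) = m i := by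
          rw [ht1, mul_one] at hprev
          exact_mod_cast hprev
        have hstep : m ((j - 1) + 1) = m i := by
          have : (j - 1) + 1 = j := by omega
          rw [this]; exact hmj
        exact ih (j - 1) (by omega) (by omega) hprevM hstep (by omega)
  -- upward propagation
  have up : ∀ k : ℕ, ∀ j, 1 ≤ j → j ≤ l → m j = m i → m (j + 1) = m i →
      l - j ≤ k → False := by
    intro k
    induction k with
    | zero =>
      intro j hj1 hjl hmj hmj1 hjk
      have : j = l := by omega
      rw [this] at hmj1
      rw [hml] at hmj1
      omega
    | succ k ih =>
      intro j hj1 hjl hmj hmj1 hjk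
      rcases eq_or_lt_of_le hjl with hj | hj
      · rw [hj] at hmj1
        rw [hml] at hmj1
        omega
      · have hjl' : j + 1 ≤ l := hj
        obtain ⟨e', he'⟩ := hrel (j + 1) (by omega) hjl'
        have hs : (j + 1) - 1 = j := by omega
        rw [hs, hmj, hmj1] at he'
        have hnext : (m (j + 1 + 1) : ℤ) = (m i : ℤ) * (-e' - 1) := by
          linear_combination he'
        rcases eq_or_lt_of_le hjl' with hj2 | hj2
        · -- j + 1 = l, so j + 2 = l + 1 and m (j+2) = 1
          have h1 : m (j + 1 + 1) = 1 := by rw [hj2]; exact hml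
          rw [h1] at hnext
          push_cast at hnext
          rcases le_or_gt (-e' - 1) 0 with ht | ht
          · have := mul_nonpos_of_nonneg_of_nonpos
              (by linarith : (0 : ℤ) ≤ (m i : ℤ)) ht
            linarith
          · have ht' : (1 : ℤ) ≤ -e' - 1 := ht
            have := mul_le_mul_of_nonneg_left ht'
              (by linarith : (0 : ℤ) ≤ (m i : ℤ))
            linarith
        · have hle : (m (j + 1 + 1) : ℤ) ≤ (m i : ℤ) := by
            exact_mod_cast hmax (j + 2) (by omega) (by omega)
          have hposj : (0 : ℤ) < (m (j + 1 + 1) : ℤ) := by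
            exact_mod_cast hpos (j + 2) (by omega)
          have ht1 : (-e' - 1) = 1 := by
            have hlo : (1 : ℤ) ≤ -e' - 1 := by
              by_contra h
              push_neg at h
              have h0 : -e' - 1 ≤ 0 := by omega
              have := mul_nonpos_of_nonneg_of_nonpos
                (by linarith : (0 : ℤ) ≤ (m i : ℤ)) h0
              linarith
            have hhi : -e' - 1 ≤ 1 := by
              by_contra h
              push_neg at h
              have h2 : (2 : ℤ) ≤ -e' - 1 := by omega
              have := mul_le_mul_of_nonneg_left h2
                (by linarith : (0 : ℤ) ≤ (m i : ℤ))
              linarith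
            omega
          have hnextM : m (j + 1 + 1) = m i := by
            rw [ht1, mul_one] at hnext
            exact_mod_cast hnext
          exact ih (j + 1) (by omega) hjl' hmj1 hnextM (by omega)
  -- m (i-1) < m i
  have h1 : m (i - 1) < m i := by
    rcases eq_or_lt_of_le hi1 with hi | hi
    · have : i - 1 = 0 := by omega
      rw [this, hm0]; exact hbig
    · have hle : m (i - 1) ≤ m i := hmax (i - 1) (by omega) (by omega)
      rcases eq_or_lt_of_le hle with heq | hlt
      · exfalso
        have hstep : m ((i - 1) + 1) = m i := by
          have : (i - 1) + 1 = i := by omega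
          rw [this]
        exact down (i - 1) (i - 1) (by omega) (by omega) heq hstep le_rfl
      · exact hlt
  have h2 : m (i + 1) < m i := by
    rcases eq_or_lt_of_le hil with hi | hi
    · have hz : i + 1 = l + 1 := by omega
      rw [hz, hml]; exact hbig
    · have hle : m (i + 1) ≤ m i := hmax (i + 1) (by omega) (by omega)
      rcases eq_or_lt_of_le hle with heq | hlt
      · exact absurd (up (l - i) i hi1 hil rfl heq le_rfl) (by simp)
      · exact hlt
  refine ⟨h1, h2, ?_⟩
  have hz1 : (m (i - 1) : ℤ) < (m i : ℤ) := by exact_mod_cast h1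
  have hz2 : (m (i + 1) : ℤ) < (m i : ℤ) := by exact_mod_cast h2
  have hp1 : (0 : ℤ) < (m (i - 1) : ℤ) := by exact_mod_cast hpos (i - 1) (by omega)
  have hp2 : (0 : ℤ) < (m (i + 1) : ℤ) := by exact_mod_cast hpos (i + 1) (by omega)
  have key : (m i : ℤ) * (-e) = (m (i - 1) : ℤ) + (m (i + 1) : ℤ) := by
    linear_combination -he
  have hlo : (1 : ℤ) ≤ -e := by
    by_contra h
    push_neg at h
    have h0 : -e ≤ 0 := by omega
    have := mul_nonpos_of_nonneg_of_nonpos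
      (by linarith : (0 : ℤ) ≤ (m i : ℤ)) h0
    linarith
  have hhi : -e ≤ 1 := by
    by_contra h
    push_neg at h
    have h2 : (2 : ℤ) ≤ -e := by omega
    have := mul_le_mul_of_nonneg_left h2
      (by linarith : (0 : ℤ) ≤ (m i : ℤ))
    linarith
  omega
end
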